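/- Under the homogeneity assumption, the set function ν on the ring B defined by ν(B) = μ(f(B))/α_f (for any f ∈ S with f(B) ⊆ X measurable) is countably additive: if A₁, A₂, … ∈ B are pairwise disjoint and ⋃ₙ Aₙ ∈ B, then ν(⋃ₙ Aₙ) = Σₙ ν(Aₙ). -/

import Mathlib

open MeasureTheory

def PQRel {X : Type*} (S : Set (X → X)) : (X × S) → (X × S) → Prop :=
  fun a b => (b.2 : X → X) a.1 = (a.2 : X → X) b.1

def IsAct {X : Type*} (S : Set (X → X)) (f : X → X)
    (F : Quot (PQRel S) → Quot (PQRel S)) : Prop :=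
  ∀ (x : X) (g : S), F (Quot.mk (PQRel S) (x, g)) = Quot.mk (PQRel S) (f x, g)

def IsIota {X : Type*} (S : Set (X → X)) (ι : X → Quot (PQRel S)) : Prop :=
  ∀ (x : X) (h : S), ι x = Quot.mk (PQRel S) ((h : X → X) x, h)

def MemB {X : Type*} [MeasurableSpace X] (S : Set (X → X))
    (ι : X → Quot (PQRel S)) (A : Set (Quot (PQRel S))) : Prop :=
  ∃ f ∈ S, ∃ F, IsAct S f F ∧ F '' A ⊆ Set.range ι ∧ MeasurableSet (ι ⁻¹' (F '' A))

/-- the set function `ν(B) = μ(f(B))/α_f` on the ring `B` is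
countably additive: for pairwise disjoint `A₁, A₂, … ∈ B` with `⋃ₙ Aₙ ∈ B`,
`ν(⋃ₙ Aₙ) = Σₙ ν(Aₙ)`. -/
theorem nu_countably_additive {X : Type*} [MeasurableSpace X] (μ : Measure X)
    (S : Set (X → X))
    (hinj : ∀ f ∈ S, Function.Injective f)
    (hcomp : ∀ f ∈ S, ∀ g ∈ S, f ∘ g ∈ S)
    (hcomm : ∀ f ∈ S, ∀ g ∈ S, f ∘ g = g ∘ f)
    (hmeas : ∀ f ∈ S, Measurable f)
    (himg : ∀ f ∈ S, ∀ E : Set X, MeasurableSet E → MeasurableSet (f '' E))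
    (hhom : ∀ f ∈ S, ∃ α : ENNReal, 0 < α ∧ α ≠ ⊤ ∧
      ∀ E : Set X, MeasurableSet E → μ (f '' E) = α * μ E)
    (ι : X → Quot (PQRel S)) (hι : IsIota S ι)
    (ν : Set (Quot (PQRel S)) → ENNReal)
    (hν : ∀ (B : Set (Quot (PQRel S))) (f : X → X), f ∈ S →
      ∀ (α : ENNReal), 0 < α → α ≠ ⊤ →
      (∀ E : Set X, MeasurableSet E → μ (f '' E) = α * μ E) →
      ∀ F : Quot (PQRel S) → Quot (PQRel S), IsAct S f F →
      F '' B ⊆ Set.range ι → MeasurableSet (ι ⁻¹' (F '' B)) →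
      ν B = μ (ι ⁻¹' (F '' B)) / α)
    (A : ℕ → Set (Quot (PQRel S)))
    (hdisj : Pairwise (Function.onFun Disjoint A))
    (hAmem : ∀ n, MemB S ι (A n))
    (hUnion : MemB S ι (⋃ n, A n)) :
    ν (⋃ n, A n) = ∑' n, ν (A n) := by
  classical
  obtain ⟨f, hfS, F, hF, hFsub, hFmeas⟩ := hUnion
  obtain ⟨α, hα0, hαt, hαhom⟩ := hhom f hfS
  -- pointwise commutation of elements of S
  have comm : ∀ (p q : S) (x : X), (p : X → X) ((q : X → X) x) = (q : X → X) ((p : X → X) x) :=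
    fun p q x => congrFun (hcomm p p.2 q q.2) x
  -- PQRel is an equivalence relation
  have hequiv : Equivalence (PQRel S) := by
    constructor
    · intro a; rfl
    · intro a b h; exact h.symm
    · rintro ⟨x, g⟩ ⟨y, h⟩ ⟨z, k⟩ h1 h2
      -- h1 : h x = g y, h2 : k y = h z, goal : k x = g z
      apply hinj h h.2
      calc (h : X → X) ((k : X → X) x) = (k : X → X) ((h : X → X) x) := comm h k x
        _ = (k : X → X) ((g : X → X) y) := by rw [h1]
        _ = (g : X → X) ((k : X → X) y) := comm k g y
        _ = (g : X → X) ((h : X → X) z) := by rw [h2]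
        _ = (h : X → X) ((g : X → X) z) := comm g h z
  have hexact : ∀ a b : X × S, Quot.mk (PQRel S) a = Quot.mk (PQRel S) b → PQRel S a b :=
    fun a b h => (hequiv.eqvGen_iff).mp (Quot.eqvGen_exact h)
  -- ι is injective
  have hιinj : Function.Injective ι := by
    intro x y hxy
    rw [hι x ⟨f, hfS⟩, hι y ⟨f, hfS⟩] at hxy
    have := hexact _ _ hxy
    exact hinj f hfS (hinj f hfS this)
  -- actions commute with ι
  have keyIota : ∀ (p : X → X), p ∈ S → ∀ P, IsAct S p P → ∀ x, P (ι x) = ι (p x) := by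
    intro p hp P hP x
    exact (congrArg P (hι x ⟨p, hp⟩)).trans
      ((hP (p x) ⟨p, hp⟩).trans (hι (p x) ⟨p, hp⟩).symm)
  -- actions are injective
  have keyInj : ∀ (p : X → X), p ∈ S → ∀ P, IsAct S p P → Function.Injective P := by
    intro p hp P hP q₁ q₂
    induction q₁ using Quot.ind with
    | _ a =>
      induction q₂ using Quot.ind with
      | _ b =>
        obtain ⟨x, g⟩ := a
        obtain ⟨y, h⟩ := b
        intro hq
        rw [hP x g, hP y h] at hq
        have h1 : (h : X → X) (p x) = (g : X → X) (p y) := hexact _ _ hq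
        have h2 : p ((h : X → X) x) = p ((g : X → X) y) := by
          have c1 := congrFun (hcomm p hp h h.2) x
          have c2 := congrFun (hcomm p hp g g.2) y
          simp only [Function.comp_apply] at c1 c2
          rw [c1, c2]; exact h1
        exact Quot.sound (hinj p hp h2)
  -- the key set identity
  have keySet : ∀ (p : X → X), p ∈ S → ∀ P, IsAct S p P →
      ∀ (B : Set (Quot (PQRel S))), B ⊆ Set.range ι →
      ι ⁻¹' (P '' B) = p '' (ι ⁻¹' B) := by
    intro p hp P hP B hB
    ext x
    constructor
    · rintro ⟨q, hqB, hq⟩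
      obtain ⟨w, rfl⟩ := hB hqB
      rw [keyIota p hp P hP w] at hq
      exact ⟨w, hqB, hιinj hq⟩
    · rintro ⟨w, hw, rfl⟩
      exact ⟨ι w, hw, keyIota p hp P hP w⟩
  -- per-n data
  choose fn hfnS Fn hFn hFnsub hFnmeas using hAmem
  choose αn hαn0 hαnt hαnhom using fun n => hhom (fn n) (hfnS n)
  set D : ℕ → Set X := fun n => ι ⁻¹' (F '' A n) with hD
  set E : ℕ → Set X := fun n => ι ⁻¹' (Fn n '' A n) with hE
  have hFAn_sub : ∀ n, F '' A n ⊆ Set.range ι := fun n =>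
    (Set.image_mono (f := F) (Set.subset_iUnion A n)).trans hFsub
  -- F ∘ Fn n = Fn n ∘ F pointwise, so the two composed images agree
  have hFFn : ∀ n q, F (Fn n q) = Fn n (F q) := by
    intro n q
    induction q using Quot.ind with
    | _ a =>
      obtain ⟨x, g⟩ := a
      rw [hFn n x g, hF x g, hF (fn n x) g, hFn n (f x) g]
      exact congrArg (fun y => Quot.mk (PQRel S) (y, g))
        (congrFun (hcomm f hfS (fn n) (hfnS n)) x)
  have hswap : ∀ n, F '' (Fn n '' A n) = Fn n '' (F '' A n) := by
    intro n
    rw [← Set.image_comp, ← Set.image_comp]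
    exact Set.image_congr' (fun q => hFFn n q)
  have hswap' : ∀ n, (fn n) '' (D n) = f '' (E n) := by
    intro n
    rw [hD, hE]
    rw [← keySet (fn n) (hfnS n) (Fn n) (hFn n) _ (hFAn_sub n),
        ← keySet f hfS F hF _ (hFnsub n), hswap]
  have hfE_meas : ∀ n, MeasurableSet (f '' (E n)) := fun n =>
    himg f hfS (E n) (hFnmeas n)
  have hDmeas : ∀ n, MeasurableSet (D n) := by
    intro n
    have h1 : D n = (fn n) ⁻¹' ((fn n) '' (D n)) :=
      (Set.preimage_image_eq (D n) (hinj (fn n) (hfnS n))).symm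
    rw [h1, hswap' n]
    exact hmeas (fn n) (hfnS n) (hfE_meas n)
  -- value of ν on each A n
  have hνAn : ∀ n, ν (A n) = μ (D n) / α := by
    intro n
    have hact : IsAct S (f ∘ fn n) (F ∘ Fn n) := by
      intro x g
      simp only [Function.comp_apply]
      rw [hFn n x g, hF (fn n x) g]
    have hhomc : ∀ E' : Set X, MeasurableSet E' →
        μ ((f ∘ fn n) '' E') = (α * αn n) * μ E' := by
      intro E' hE'
      rw [Set.image_comp, hαhom _ (himg (fn n) (hfnS n) E' hE'), hαnhom n E' hE', mul_assoc]
    have himgc : (F ∘ Fn n) '' A n ⊆ Set.range ι := by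
      rw [Set.image_comp]
      rintro q ⟨q', hq', rfl⟩
      obtain ⟨w, rfl⟩ := hFnsub n hq'
      exact ⟨f w, (keyIota f hfS F hF w).symm⟩
    have hpre : ι ⁻¹' ((F ∘ Fn n) '' A n) = f '' (E n) := by
      rw [Set.image_comp]
      exact keySet f hfS F hF _ (hFnsub n)
    have hmeasc : MeasurableSet (ι ⁻¹' ((F ∘ Fn n) '' A n)) := by
      rw [hpre]; exact hfE_meas n
    have := hν (A n) (f ∘ fn n) (hcomp f hfS (fn n) (hfnS n)) (α * αn n)
      (ENNReal.mul_pos hα0.ne' (hαn0 n).ne') (ENNReal.mul_ne_top hαt (hαnt n)) hhomc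
      (F ∘ Fn n) hact himgc hmeasc
    rw [this, hpre, ← hswap' n, hαnhom n (D n) (hDmeas n), mul_comm α (αn n)]
    exact ENNReal.mul_div_mul_left (μ (D n)) α (hαn0 n).ne' (hαnt n)
  -- value of ν on the union
  have hUnionEq : ι ⁻¹' (F '' ⋃ n, A n) = ⋃ n, D n := by
    rw [Set.image_iUnion, Set.preimage_iUnion]
  have hDdisj : Pairwise (Function.onFun Disjoint D) := by
    intro m n hmn
    exact Disjoint.preimage ι
      ((Set.disjoint_image_iff (keyInj f hfS F hF)).mpr (hdisj hmn))
  have hνU := hν (⋃ n, A n) f hfS α hα0 hαt hαhom F hF hFsub hFmeas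
  rw [hνU, hUnionEq, measure_iUnion hDdisj hDmeas]
  simp only [hνAn, div_eq_mul_inv, ENNReal.tsum_mul_right]
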